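/- arXiv:2304.01303 — 5 statements merged into one kernel-verified Lean document; each statement's English description precedes it below -/
import Mathlib

section
/- Let X be a nonempty finite set and let P₁, P₂ be transition matrices on X (nonnegative entries, rows summing to 1), reversible with respect to everywhere-positive probability mass functions π₁ and π₂ respectively. Suppose that for each ordered pair ξ ≠ ξ̃ with (ξ, ξ̃) ∈ E_{P₂} a path γ_{ξ,ξ̃} from ξ to ξ̃ in E_{P₁} has been fixed, and define the congestion c = max over edges (τ, τ̃) ∈ E_{P₁} with τ ≠ τ̃ of (1/(π₁(τ)P₁(τ,τ̃))) · Σ over pairs (ξ,ξ̃) whose path γ_{ξ,ξ̃} contains (τ,τ̃) as a consecutive pair of states, of |γ_{ξ,ξ̃}| · π₂(ξ)P₂(ξ,ξ̃). Then E_{P₂}(f) ≤ c · E_{P₁}(f) for every function f : X → ℝ. -/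
private lemma cs_step (n s t a : ℝ) (hn : 1 ≤ n) (ht : 0 ≤ t) (h : s ^ 2 ≤ n * t) :
    (a + s) ^ 2 ≤ (n + 1) * (a ^ 2 + t) := by
  nlinarith [sq_nonneg (n * a - s), mul_nonneg (by linarith : (0:ℝ) ≤ n - 1)
    (by linarith : (0:ℝ) ≤ n * t - s ^ 2)]

private lemma list_sq_sum_le (m : List ℝ) :
    m.sum ^ 2 ≤ (m.length : ℝ) * (m.map (fun x => x ^ 2)).sum := by
  induction m with
  | nil => simp
  | cons a m ih =>
    have ht : 0 ≤ (m.map (fun x => x ^ 2)).sum := by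
      apply List.sum_nonneg; intro x hx
      simp only [List.mem_map] at hx; obtain ⟨y, _, rfl⟩ := hx; positivity
    rcases m with _ | ⟨b, m⟩
    · simp
    · have hn1 : (1:ℝ) ≤ ((b :: m).length : ℝ) := by
        simp only [List.length_cons]; exact_mod_cast Nat.succ_le_succ (Nat.zero_le _)
      simp only [List.sum_cons, List.map_cons, List.length_cons] at *
      push_cast at *
      have := cs_step ((m.length : ℝ) + 1) (b + m.sum) (b ^ 2 + (m.map (fun x => x ^ 2)).sum) a
        hn1 (by positivity) ih
      linarith

private lemma telescope {X : Type*} (f : X → ℝ) :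
    ∀ (l : List X) (x y : X), l.head? = some x → l.getLast? = some y →
      ((l.zip l.tail).map (fun e => f e.1 - f e.2)).sum = f x - f y := by
  intro l
  induction l with
  | nil => intro x y h; simp at h
  | cons a t ih =>
    intro x y hh hl
    simp only [List.head?_cons, Option.some_inj] at hh
    subst hh
    rcases t with _ | ⟨b, t⟩
    · simp only [List.getLast?_singleton, Option.some_inj] at hl
      subst hl; simp
    · have hl' : (b :: t).getLast? = some y := by
        rwa [List.getLast?_cons_cons] at hl
      have h2 := ih b y rfl hl'
      simp only [List.tail_cons, List.zip_cons_cons, List.map_cons, List.sum_cons] at *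
      rw [h2]; ring

private lemma edges_append {X : Type*} (x : X) (v : List X) :
    ∀ (u : List X), ((u ++ x :: v).zip (u ++ x :: v).tail) =
      ((u ++ [x]).zip (u ++ [x]).tail) ++ ((x :: v).zip v) := by
  intro u
  induction u with
  | nil => simp
  | cons a u ih =>
    rcases u with _ | ⟨b, u⟩
    · simp
    · simp only [List.cons_append, List.tail_cons, List.zip_cons_cons] at *
      rw [ih]

private lemma nodup_edges {X : Type*} : ∀ (l : List X), l.Nodup → (l.zip l.tail).Nodup := by
  intro l
  induction l with
  | nil => simp
  | cons a t ih =>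
    intro h
    rcases t with _ | ⟨b, t⟩
    · simp
    · obtain ⟨h1, h2⟩ := List.nodup_cons.mp h
      have h3 := ih h2
      simp only [List.tail_cons, List.zip_cons_cons] at h3 ⊢
      refine List.nodup_cons.mpr ⟨fun hmem => ?_, h3⟩
      exact h1 (List.of_mem_zip hmem).1

private lemma not_nodup_split {X : Type*} : ∀ (l : List X), ¬ l.Nodup →
    ∃ (a : List X) (x : X) (b c : List X), l = a ++ x :: (b ++ x :: c) := by
  intro l
  induction l with
  | nil => intro h; exact absurd List.nodup_nil h
  | cons hd t ih =>
    intro h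
    by_cases hmem : hd ∈ t
    · obtain ⟨b, c, rfl⟩ := List.append_of_mem hmem
      exact ⟨[], hd, b, c, rfl⟩
    · have : ¬ t.Nodup := fun hn => h (List.nodup_cons.mpr ⟨hmem, hn⟩)
      obtain ⟨a, x, b, c, rfl⟩ := ih this
      exact ⟨hd :: a, x, b, c, rfl⟩

private lemma reduce {X : Type*} : ∀ (n : ℕ) (l : List X), l.length ≤ n →
    ∃ l' : List X, l'.head? = l.head? ∧ l'.getLast? = l.getLast? ∧ l'.Nodup ∧
      (∀ e ∈ l'.zip l'.tail, e ∈ l.zip l.tail) ∧ l'.length ≤ l.length := by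
  intro n
  induction n with
  | zero =>
    intro l h
    have hl : l = [] := List.length_eq_zero_iff.mp (Nat.le_zero.mp h)
    subst hl
    exact ⟨[], rfl, rfl, List.nodup_nil, fun e he => he, le_rfl⟩
  | succ n ih =>
    intro l hlen
    by_cases hnd : l.Nodup
    · exact ⟨l, rfl, rfl, hnd, fun e he => he, le_rfl⟩
    · obtain ⟨a, x, b, c, rfl⟩ := not_nodup_split l hnd
      have hlen₀ : (a ++ x :: c).length ≤ n := by
        simp only [List.length_append, List.length_cons] at hlen ⊢
        omega
      obtain ⟨l', h1, h2, h3, h4, h5⟩ := ih (a ++ x :: c) hlen₀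
      refine ⟨l', ?_, ?_, h3, ?_, ?_⟩
      · rw [h1]
        rcases a with _ | ⟨a0, a⟩ <;> simp
      · rw [h2, List.getLast?_append_cons, List.getLast?_append_cons,
          show x :: (b ++ x :: c) = (x :: b) ++ x :: c from rfl, List.getLast?_append_cons]
      · intro e he
        have he₀ := h4 e he
        rw [edges_append x c a] at he₀
        rw [edges_append x (b ++ x :: c) a]
        rcases List.mem_append.mp he₀ with h | h
        · exact List.mem_append.mpr (Or.inl h)
        · refine List.mem_append.mpr (Or.inr ?_)
          have : (x :: (b ++ x :: c)).zip (b ++ x :: c)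
              = ((x :: b) ++ [x]).zip ((x :: b) ++ [x]).tail ++ (x :: c).zip c := by
            have := edges_append x c (x :: b)
            simpa using this
          rw [this]
          exact List.mem_append.mpr (Or.inr h)
      · refine h5.trans ?_
        simp only [List.length_append, List.length_cons]
        omega

private lemma key_bound {X : Type*} [Fintype X] [DecidableEq X] (f : X → ℝ) (l : List X)
    (ξ ξ' : X) (hh : l.head? = some ξ) (hl : l.getLast? = some ξ') :
    (f ξ - f ξ') ^ 2 ≤ ((l.length : ℝ) - 1) *
      ∑ e ∈ Finset.univ.filter (fun e : X × X => e ∈ l.zip l.tail), (f e.1 - f e.2) ^ 2 := by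
  classical
  obtain ⟨l', h1, h2, h3, h4, h5⟩ := reduce l.length l le_rfl
  have hh' : l'.head? = some ξ := h1.trans hh
  have hl' : l'.getLast? = some ξ' := h2.trans hl
  have hne : l' ≠ [] := by intro h; subst h; simp at hh'
  have hlen1 : 1 ≤ l'.length := List.length_pos_iff.mpr hne
  have htel := telescope f l' ξ ξ' hh' hl'
  have hcs := list_sq_sum_le ((l'.zip l'.tail).map (fun e => f e.1 - f e.2))
  rw [htel] at hcs
  have hlenE : ((l'.zip l'.tail).map (fun e => f e.1 - f e.2)).length = l'.length - 1 := by
    simp [List.length_zip]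
  -- sum over the list equals sum over toFinset (nodup), which is ≤ sum over the filter
  have hnd := nodup_edges l' h3
  have hsum_eq : ((((l'.zip l'.tail).map (fun e => f e.1 - f e.2))).map (fun x => x ^ 2)).sum
      = ∑ e ∈ (l'.zip l'.tail).toFinset, (f e.1 - f e.2) ^ 2 := by
    rw [List.sum_toFinset _ hnd, List.map_map]
    rfl
  have hsub : (l'.zip l'.tail).toFinset ⊆
      Finset.univ.filter (fun e : X × X => e ∈ l.zip l.tail) := by
    intro e he
    simp only [List.mem_toFinset] at he
    simp only [Finset.mem_filter, Finset.mem_univ, true_and]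
    exact h4 e he
  have hsum_le : ∑ e ∈ (l'.zip l'.tail).toFinset, (f e.1 - f e.2) ^ 2 ≤
      ∑ e ∈ Finset.univ.filter (fun e : X × X => e ∈ l.zip l.tail), (f e.1 - f e.2) ^ 2 :=
    Finset.sum_le_sum_of_subset_of_nonneg hsub (fun e _ _ => by positivity)
  have hcast : (((l'.zip l'.tail).map (fun e => f e.1 - f e.2)).length : ℝ)
      ≤ (l.length : ℝ) - 1 := by
    rw [hlenE]
    have : l'.length - 1 ≤ l.length - 1 := by omega
    have h1' : ((l'.length - 1 : ℕ) : ℝ) = (l'.length : ℝ) - 1 := by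
      push_cast [Nat.cast_sub hlen1]; ring
    rw [h1']
    have : 1 ≤ l.length := by omega
    have : (l'.length : ℝ) ≤ (l.length : ℝ) := by exact_mod_cast h5
    linarith
  calc (f ξ - f ξ') ^ 2
      ≤ (((l'.zip l'.tail).map (fun e => f e.1 - f e.2)).length : ℝ) *
        ((((l'.zip l'.tail).map (fun e => f e.1 - f e.2))).map (fun x => x ^ 2)).sum := hcs
    _ ≤ ((l.length : ℝ) - 1) *
        ∑ e ∈ Finset.univ.filter (fun e : X × X => e ∈ l.zip l.tail), (f e.1 - f e.2) ^ 2 := by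
        rw [hsum_eq]
        apply mul_le_mul hcast hsum_le
        · exact Finset.sum_nonneg (fun e _ => by positivity)
        · have : (0:ℝ) ≤ (((l'.zip l'.tail).map (fun e => f e.1 - f e.2)).length : ℝ) := by
            positivity
          linarith [hcast]
        -- last arg: 0 ≤ l.length - 1

/-- canonical path / comparison theorem: let `P₁, P₂` be transition matrices
on a nonempty finite set `X`, reversible with respect to everywhere-positive probability mass
functions `π₁, π₂`.  Suppose for each ordered pair `ξ ≠ ξ̃` in the edge set `E_{P₂}` a path
`γ ξ ξ̃` from `ξ` to `ξ̃` whose consecutive pairs lie in `E_{P₁}` has been fixed, and that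
`c` bounds the congestion: for every edge `(τ, τ̃) ∈ E_{P₁}` with `τ ≠ τ̃`,
`Σ_{(ξ,ξ̃) : (τ,τ̃) ∈ γ_{ξ,ξ̃}} |γ_{ξ,ξ̃}| π₂(ξ)P₂(ξ,ξ̃) ≤ c ⋅ π₁(τ)P₁(τ,τ̃)`
(so the congestion `max` is at most `c`, and in particular the conclusion holds for `c`
equal to the congestion itself).  Then `E_{P₂}(f) ≤ c ⋅ E_{P₁}(f)` for every `f : X → ℝ`,
where `E_P(f) = (1/2) Σ_{x,y} π(x)P(x,y)(f(x) − f(y))²`. -/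
theorem stmt_0 {X : Type*} [Fintype X] [DecidableEq X] [Nonempty X]
    (P₁ P₂ : X → X → ℝ) (π₁ π₂ : X → ℝ)
    (hP₁nn : ∀ x y, 0 ≤ P₁ x y) (hP₁row : ∀ x, ∑ y, P₁ x y = 1)
    (hP₂nn : ∀ x y, 0 ≤ P₂ x y) (hP₂row : ∀ x, ∑ y, P₂ x y = 1)
    (hπ₁pos : ∀ x, 0 < π₁ x) (hπ₁sum : ∑ x, π₁ x = 1)
    (hπ₂pos : ∀ x, 0 < π₂ x) (hπ₂sum : ∑ x, π₂ x = 1)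
    (hrev₁ : ∀ x y, π₁ x * P₁ x y = π₁ y * P₁ y x)
    (hrev₂ : ∀ x y, π₂ x * P₂ x y = π₂ y * P₂ y x)
    (γ : X → X → List X)
    (hγhead : ∀ ξ ξ', ξ ≠ ξ' → 0 < π₂ ξ * P₂ ξ ξ' → (γ ξ ξ').head? = some ξ)
    (hγlast : ∀ ξ ξ', ξ ≠ ξ' → 0 < π₂ ξ * P₂ ξ ξ' → (γ ξ ξ').getLast? = some ξ')
    (hγedge : ∀ ξ ξ', ξ ≠ ξ' → 0 < π₂ ξ * P₂ ξ ξ' →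
      ∀ e ∈ (γ ξ ξ').zip (γ ξ ξ').tail, 0 < π₁ e.1 * P₁ e.1 e.2)
    (c : ℝ)
    (hc : ∀ τ τ', τ ≠ τ' → 0 < π₁ τ * P₁ τ τ' →
      (∑ e ∈ Finset.univ.filter (fun e : X × X => e.1 ≠ e.2 ∧ 0 < π₂ e.1 * P₂ e.1 e.2 ∧
          (τ, τ') ∈ (γ e.1 e.2).zip (γ e.1 e.2).tail),
        (((γ e.1 e.2).length : ℝ) - 1) * (π₂ e.1 * P₂ e.1 e.2)) ≤ c * (π₁ τ * P₁ τ τ')) :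
    ∀ f : X → ℝ,
      1 / 2 * ∑ x, ∑ y, π₂ x * P₂ x y * (f x - f y) ^ 2 ≤
        c * (1 / 2 * ∑ x, ∑ y, π₁ x * P₁ x y * (f x - f y) ^ 2) := by
  classical
  intro f
  set D : Finset (X × X) :=
    Finset.univ.filter (fun e : X × X => e.1 ≠ e.2 ∧ 0 < π₂ e.1 * P₂ e.1 e.2) with hD
  -- Step 1: rewrite the LHS double sum as a sum over D
  have hprod2 : (∑ e : X × X, π₂ e.1 * P₂ e.1 e.2 * (f e.1 - f e.2) ^ 2)
      = ∑ x, ∑ y, π₂ x * P₂ x y * (f x - f y) ^ 2 :=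
    Fintype.sum_prod_type _
  have hS2 : ∑ x, ∑ y, π₂ x * P₂ x y * (f x - f y) ^ 2
      = ∑ e ∈ D, π₂ e.1 * P₂ e.1 e.2 * (f e.1 - f e.2) ^ 2 := by
    rw [← hprod2, hD]
    rw [Finset.sum_filter_of_ne]
    intro e _ hne
    constructor
    · intro h; apply hne; rw [h]; simp
    · by_contra h
      have h0 : π₂ e.1 * P₂ e.1 e.2 = 0 :=
        le_antisymm (not_lt.mp h) (mul_nonneg (hπ₂pos e.1).le (hP₂nn e.1 e.2))
      exact hne (by rw [h0]; ring)
  -- Step 2: per-pair bound, summed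
  have step2 : ∑ e ∈ D, π₂ e.1 * P₂ e.1 e.2 * (f e.1 - f e.2) ^ 2
      ≤ ∑ e ∈ D, ∑ e' : X × X, (if e' ∈ (γ e.1 e.2).zip (γ e.1 e.2).tail then
          (((γ e.1 e.2).length : ℝ) - 1) * (π₂ e.1 * P₂ e.1 e.2) else 0) *
          (f e'.1 - f e'.2) ^ 2 := by
    apply Finset.sum_le_sum
    intro e he
    rw [hD, Finset.mem_filter] at he
    obtain ⟨-, hne, hpos⟩ := he
    have hkb := key_bound f (γ e.1 e.2) e.1 e.2 (hγhead e.1 e.2 hne hpos)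
      (hγlast e.1 e.2 hne hpos)
    have : ∑ e' : X × X, (if e' ∈ (γ e.1 e.2).zip (γ e.1 e.2).tail then
          (((γ e.1 e.2).length : ℝ) - 1) * (π₂ e.1 * P₂ e.1 e.2) else 0) *
          (f e'.1 - f e'.2) ^ 2
        = (π₂ e.1 * P₂ e.1 e.2) * ((((γ e.1 e.2).length : ℝ) - 1) *
          ∑ e' ∈ Finset.univ.filter
            (fun e' : X × X => e' ∈ (γ e.1 e.2).zip (γ e.1 e.2).tail),
            (f e'.1 - f e'.2) ^ 2) := by
      simp only [ite_mul, zero_mul]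
      rw [← Finset.sum_filter, Finset.mul_sum, Finset.mul_sum]
      exact Finset.sum_congr rfl fun e' _ => by ring
    rw [this]
    exact mul_le_mul_of_nonneg_left hkb hpos.le
  -- Step 3: swap sums and apply the congestion bound hc
  have step3 : ∑ e ∈ D, ∑ e' : X × X, (if e' ∈ (γ e.1 e.2).zip (γ e.1 e.2).tail then
          (((γ e.1 e.2).length : ℝ) - 1) * (π₂ e.1 * P₂ e.1 e.2) else 0) *
          (f e'.1 - f e'.2) ^ 2
      ≤ ∑ e' : X × X, c * (π₁ e'.1 * P₁ e'.1 e'.2 * (f e'.1 - f e'.2) ^ 2) := by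
    rw [Finset.sum_comm]
    apply Finset.sum_le_sum
    intro e' _
    rw [← Finset.sum_mul]
    have hinner : ∑ e ∈ D, (if e' ∈ (γ e.1 e.2).zip (γ e.1 e.2).tail then
          (((γ e.1 e.2).length : ℝ) - 1) * (π₂ e.1 * P₂ e.1 e.2) else 0)
        = ∑ e ∈ Finset.univ.filter (fun e : X × X => e.1 ≠ e.2 ∧ 0 < π₂ e.1 * P₂ e.1 e.2 ∧
            (e'.1, e'.2) ∈ (γ e.1 e.2).zip (γ e.1 e.2).tail),
          (((γ e.1 e.2).length : ℝ) - 1) * (π₂ e.1 * P₂ e.1 e.2) := by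
      rw [← Finset.sum_filter, hD, Finset.filter_filter]
      apply Finset.sum_congr _ (fun _ _ => rfl)
      apply Finset.filter_congr
      intro e _
      simp [and_assoc]
    rw [hinner]
    by_cases hdiag : e'.1 = e'.2
    · have : (f e'.1 - f e'.2) ^ 2 = 0 := by rw [hdiag]; ring
      rw [this]
      simp
    · by_cases hpos1 : 0 < π₁ e'.1 * P₁ e'.1 e'.2
      · have hcc := hc e'.1 e'.2 hdiag hpos1
        have hg : (0:ℝ) ≤ (f e'.1 - f e'.2) ^ 2 := by positivity
        calc (∑ e ∈ Finset.univ.filter (fun e : X × X => e.1 ≠ e.2 ∧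
                0 < π₂ e.1 * P₂ e.1 e.2 ∧
                (e'.1, e'.2) ∈ (γ e.1 e.2).zip (γ e.1 e.2).tail),
              (((γ e.1 e.2).length : ℝ) - 1) * (π₂ e.1 * P₂ e.1 e.2)) * (f e'.1 - f e'.2) ^ 2
            ≤ (c * (π₁ e'.1 * P₁ e'.1 e'.2)) * (f e'.1 - f e'.2) ^ 2 :=
              mul_le_mul_of_nonneg_right hcc hg
          _ = c * (π₁ e'.1 * P₁ e'.1 e'.2 * (f e'.1 - f e'.2) ^ 2) := by ring
      · have h0 : π₁ e'.1 * P₁ e'.1 e'.2 = 0 :=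
          le_antisymm (not_lt.mp hpos1) (mul_nonneg (hπ₁pos e'.1).le (hP₁nn e'.1 e'.2))
        have hz : ∑ e ∈ Finset.univ.filter (fun e : X × X => e.1 ≠ e.2 ∧
              0 < π₂ e.1 * P₂ e.1 e.2 ∧
              (e'.1, e'.2) ∈ (γ e.1 e.2).zip (γ e.1 e.2).tail),
            (((γ e.1 e.2).length : ℝ) - 1) * (π₂ e.1 * P₂ e.1 e.2) = 0 := by
          apply Finset.sum_eq_zero
          intro e he
          rw [Finset.mem_filter] at he
          obtain ⟨-, hne, hpos, hmem⟩ := he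
          have := hγedge e.1 e.2 hne hpos (e'.1, e'.2) hmem
          simp only at this
          rw [h0] at this
          exact absurd this (lt_irrefl 0)
        rw [hz, h0]
        simp
  -- Conclude
  have hprod1 : (∑ e : X × X, π₁ e.1 * P₁ e.1 e.2 * (f e.1 - f e.2) ^ 2)
      = ∑ x, ∑ y, π₁ x * P₁ x y * (f x - f y) ^ 2 :=
    Fintype.sum_prod_type _
  have hS1 : ∑ e' : X × X, c * (π₁ e'.1 * P₁ e'.1 e'.2 * (f e'.1 - f e'.2) ^ 2)
      = c * ∑ x, ∑ y, π₁ x * P₁ x y * (f x - f y) ^ 2 := by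
    rw [← Finset.mul_sum, hprod1]
  have hfinal : ∑ x, ∑ y, π₂ x * P₂ x y * (f x - f y) ^ 2
      ≤ c * ∑ x, ∑ y, π₁ x * P₁ x y * (f x - f y) ^ 2 := by
    rw [hS2]
    exact (step2.trans step3).trans_eq hS1
  linarith
end

section
/- Let L ≥ 0 and m ≥ 1 be integers, let 0 ≤ i < j ≤ L, and let λ ∈ {1,…,m}^{L+1}. Then every state occurring on the path obtained by applying the transpositions of Swap(i,j) in order to λ differs from λ in at most 3⌈log₂(j−i)⌉ + 2 coordinates. -/
/-- The recursively defined sequence `Swap(i,j)` of transpositions of coordinate indices: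
if `j − i ≤ 1` it is the single transposition `(i,j)`; otherwise, with `h = ⌊(i+j)/2⌋`,
it is `Swap(i,h) ++ Swap(h,j) ++ Swap(i,h)`. -/
def swapSeq (i j : ℕ) : List (ℕ × ℕ) :=
  if j ≤ i + 1 then [(i, j)]
  else swapSeq i ((i + j) / 2) ++ swapSeq ((i + j) / 2) j ++ swapSeq i ((i + j) / 2)
termination_by j - i
decreasing_by all_goals omega

/-- Applying a transposition `(a, b)` of coordinate indices to a state: the coordinates
`a` and `b` are exchanged. -/
def applyT {L m : ℕ} (σ : Fin (L + 1) → Fin m) (t : ℕ × ℕ) : Fin (L + 1) → Fin m :=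
  if h : t.1 < L + 1 ∧ t.2 < L + 1 then σ ∘ Equiv.swap ⟨t.1, h.1⟩ ⟨t.2, h.2⟩ else σ

/-- Hamming difference count. -/
def hdiff {L m : ℕ} (σ τ : Fin (L + 1) → Fin m) : ℕ :=
  (Finset.univ.filter fun ℓ => σ ℓ ≠ τ ℓ).card

lemma hdiff_triangle {L m : ℕ} (σ ρ τ : Fin (L + 1) → Fin m) :
    hdiff σ τ ≤ hdiff σ ρ + hdiff ρ τ := by
  refine le_trans (le_trans (Finset.card_le_card ?_) (Finset.card_union_le _ _)) le_rfl
  intro ℓ hℓ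
  simp only [Finset.mem_filter, Finset.mem_union, Finset.mem_univ, true_and] at *
  by_cases h : σ ℓ = ρ ℓ
  · right; rw [← h]; exact hℓ
  · left; exact h

lemma hdiff_self {L m : ℕ} (σ : Fin (L + 1) → Fin m) : hdiff σ σ = 0 := by
  simp [hdiff]

lemma hdiff_comp_swap {L m : ℕ} (σ : Fin (L + 1) → Fin m) (a b : Fin (L + 1)) :
    hdiff (σ ∘ Equiv.swap a b) σ ≤ 2 := by
  have hsub : (Finset.univ.filter fun ℓ => (σ ∘ Equiv.swap a b) ℓ ≠ σ ℓ) ⊆ {a, b} := by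
    intro ℓ hℓ
    simp only [Finset.mem_filter, Finset.mem_insert, Finset.mem_singleton] at *
    by_contra hc
    push_neg at hc
    exact hℓ.2 (by rw [Function.comp_apply, Equiv.swap_apply_of_ne_of_ne hc.1 hc.2])
  calc hdiff (σ ∘ Equiv.swap a b) σ ≤ ({a, b} : Finset (Fin (L + 1))).card :=
        Finset.card_le_card hsub
    _ ≤ 2 := Finset.card_insert_le _ _ |>.trans (by simp)

lemma hdiff_applyT {L m : ℕ} (σ : Fin (L + 1) → Fin m) (t : ℕ × ℕ) :
    hdiff (applyT σ t) σ ≤ 2 := by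
  unfold applyT
  split
  · exact hdiff_comp_swap σ _ _
  · simp [hdiff_self]

lemma hdiff_comp_swap_swap {L m : ℕ} (σ : Fin (L + 1) → Fin m) (a b c : Fin (L + 1)) :
    hdiff (σ ∘ Equiv.swap a b ∘ Equiv.swap b c) σ ≤ 3 := by
  have hsub : (Finset.univ.filter
      fun ℓ => (σ ∘ Equiv.swap a b ∘ Equiv.swap b c) ℓ ≠ σ ℓ) ⊆ {a, b, c} := by
    intro ℓ hℓ
    simp only [Finset.mem_filter, Finset.mem_insert, Finset.mem_singleton] at *
    by_contra hc'
    push_neg at hc'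
    refine hℓ.2 ?_
    simp only [Function.comp_apply]
    rw [Equiv.swap_apply_of_ne_of_ne hc'.2.1 hc'.2.2,
      Equiv.swap_apply_of_ne_of_ne hc'.1 hc'.2.1]
  refine le_trans (Finset.card_le_card hsub) ?_
  refine le_trans (Finset.card_insert_le _ _) ?_
  have := Finset.card_insert_le b ({c} : Finset (Fin (L + 1)))
  simp only [Finset.card_singleton] at this
  omega

lemma scanl_append' {α β : Type*} (f : α → β → α) (l₁ l₂ : List β) (b : α) :
    List.scanl f b (l₁ ++ l₂) =
      List.scanl f b l₁ ++ (List.scanl f (List.foldl f b l₁) l₂).tail := by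
  induction l₁ generalizing b with
  | nil =>
    cases l₂ <;> simp [List.scanl]
  | cons a l ih =>
    simp [List.scanl_cons, ih]

lemma foldl_swapSeq {L m : ℕ} (i j : ℕ) (hij : i < j) (hjL : j ≤ L)
    (σ : Fin (L + 1) → Fin m) :
    List.foldl applyT σ (swapSeq i j) = applyT σ (i, j) := by
  have hn : j - i = j - i := rfl
  generalize hgen : j - i = n at hn
  clear hn
  induction n using Nat.strong_induction_on generalizing i j σ with
  | _ n ih =>
  rw [swapSeq]
  by_cases hbase : j ≤ i + 1
  · rw [if_pos hbase]; rfl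
  · rw [if_neg hbase]
    set h := (i + j) / 2 with hh
    have hih : i < h := by omega
    have hhj : h < j := by omega
    have hhL : h ≤ L := by omega
    rw [List.foldl_append, List.foldl_append]
    rw [ih (h - i) (by omega) i h hih hhL σ rfl]
    rw [ih (j - h) (by omega) h j hhj hjL _ rfl]
    rw [ih (h - i) (by omega) i h hih hhL _ rfl]
    have hiL : i < L + 1 := by omega
    have hhL' : h < L + 1 := by omega
    have hjL' : j < L + 1 := by omega
    simp only [applyT, dif_pos (⟨hiL, hhL'⟩ : i < L + 1 ∧ h < L + 1),
      dif_pos (⟨hhL', hjL'⟩ : h < L + 1 ∧ j < L + 1),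
      dif_pos (⟨hiL, hjL'⟩ : i < L + 1 ∧ j < L + 1)]
    funext x
    simp only [Function.comp_apply]
    have key : Equiv.swap (⟨i, hiL⟩ : Fin (L + 1)) ⟨h, hhL'⟩ *
        Equiv.swap (⟨h, hhL'⟩ : Fin (L + 1)) ⟨j, hjL'⟩ *
        Equiv.swap (⟨i, hiL⟩ : Fin (L + 1)) ⟨h, hhL'⟩ =
        Equiv.swap ⟨i, hiL⟩ ⟨j, hjL'⟩ := by
      have h1 : (⟨j, hjL'⟩ : Fin (L + 1)) ≠ ⟨h, hhL'⟩ := by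
        simp [Fin.ext_iff]; omega
      have h2 : (⟨j, hjL'⟩ : Fin (L + 1)) ≠ ⟨i, hiL⟩ := by
        simp [Fin.ext_iff]; omega
      have := Equiv.swap_mul_swap_mul_swap h1 h2
      rw [Equiv.swap_comm (⟨h, hhL'⟩ : Fin (L+1)) ⟨i, hiL⟩] at this
      rw [Equiv.swap_comm (⟨j, hjL'⟩ : Fin (L+1)) ⟨h, hhL'⟩] at this
      rw [this, Equiv.swap_comm]
    rw [← key]
    simp [Equiv.Perm.mul_apply]

lemma main_bound {L m : ℕ} (i j : ℕ) (hij : i < j) (hjL : j ≤ L)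
    (σ : Fin (L + 1) → Fin m) :
    ∀ τ ∈ List.scanl applyT σ (swapSeq i j), hdiff τ σ ≤ 3 * Nat.clog 2 (j - i) + 2 := by
  have hn : j - i = j - i := rfl
  generalize hgen : j - i = n at hn
  clear hn
  induction n using Nat.strong_induction_on generalizing i j σ with
  | _ n ih =>
  intro τ hτ
  rw [swapSeq] at hτ
  by_cases hbase : j ≤ i + 1
  · rw [if_pos hbase] at hτ
    simp only [List.scanl_cons, List.scanl_nil, List.mem_cons, List.mem_singleton, List.not_mem_nil,
      or_false] at hτ
    rcases hτ with rfl | rfl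
    · simp [hdiff_self]
    · have := hdiff_applyT σ (i, j)
      omega
  · rw [if_neg hbase] at hτ
    set h := (i + j) / 2 with hh
    have hih : i < h := by omega
    have hhj : h < j := by omega
    have hhL : h ≤ L := by omega
    -- clog facts
    have h2n : 2 ≤ n := by omega
    have hrec : Nat.clog 2 ((n + 1) / 2) + 1 = Nat.clog 2 n := by
      rw [Nat.clog_of_two_le (by norm_num) h2n]; norm_num
    have hclog1 : Nat.clog 2 (h - i) + 1 ≤ Nat.clog 2 n := by
      rw [← hrec]
      have : h - i ≤ (n + 1) / 2 := by omega
      exact Nat.add_le_add_right (Nat.clog_mono_right 2 this) 1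
    have hclog2 : Nat.clog 2 (j - h) + 1 ≤ Nat.clog 2 n := by
      rw [← hrec]
      have : j - h ≤ (n + 1) / 2 := by omega
      exact Nat.add_le_add_right (Nat.clog_mono_right 2 this) 1
    rw [scanl_append', scanl_append', List.foldl_append] at hτ
    set A := swapSeq i h
    set B := swapSeq h j
    set σ₁ := List.foldl applyT σ A with hσ₁
    set σ₂ := List.foldl applyT σ₁ B with hσ₂
    have hσ₁' : σ₁ = applyT σ (i, h) := foldl_swapSeq i h hih hhL σ
    have hσ₂' : σ₂ = applyT σ₁ (h, j) := foldl_swapSeq h j hhj hjL σ₁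
    have hd1 : hdiff σ₁ σ ≤ 2 := hσ₁' ▸ hdiff_applyT σ (i, h)
    have hd2 : hdiff σ₂ σ ≤ 3 := by
      have hiL : i < L + 1 := by omega
      have hhL' : h < L + 1 := by omega
      have hjL' : j < L + 1 := by omega
      rw [hσ₂', hσ₁']
      simp only [applyT, dif_pos (⟨hiL, hhL'⟩ : i < L + 1 ∧ h < L + 1),
        dif_pos (⟨hhL', hjL'⟩ : h < L + 1 ∧ j < L + 1)]
      exact hdiff_comp_swap_swap σ _ _ _
    rcases List.mem_append.mp hτ with hτ' | hτ'
    · rcases List.mem_append.mp hτ' with hτ'' | hτ''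
      · -- first segment
        have := ih (h - i) (by omega) i h hih hhL σ rfl τ hτ''
        have hmono : Nat.clog 2 (h - i) ≤ Nat.clog 2 n := by omega
        omega
      · -- second segment
        have hmem : τ ∈ List.scanl applyT σ₁ B := List.mem_of_mem_tail hτ''
        have hb := ih (j - h) (by omega) h j hhj hjL σ₁ rfl τ hmem
        have := hdiff_triangle τ σ₁ σ
        omega
    · -- third segment
      have hmem : τ ∈ List.scanl applyT σ₂ A := List.mem_of_mem_tail hτ'
      have hb := ih (h - i) (by omega) i h hih hhL σ₂ rfl τ hmem
      have := hdiff_triangle τ σ₂ σ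
      omega

/-- for `0 ≤ i < j ≤ L` and `λ ∈ {1,…,m}^{L+1}` (states encoded as
`Fin (L+1) → Fin m`), every state on the path obtained by applying the transpositions of
`Swap(i,j)` in order to `λ` differs from `λ` in at most `3⌈log₂(j−i)⌉ + 2` coordinates. -/
theorem stmt_2 (L m : ℕ) (hm : 1 ≤ m) (i j : ℕ) (hij : i < j) (hjL : j ≤ L)
    (lam : Fin (L + 1) → Fin m) :
    ∀ τ ∈ List.scanl applyT lam (swapSeq i j),
      ((Finset.univ.filter fun ℓ => τ ℓ ≠ lam ℓ).card : ℤ) ≤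
        3 * ⌈Real.logb 2 ((j : ℝ) - (i : ℝ))⌉ + 2 := by
  intro τ hτ
  have hb := main_bound i j hij hjL lam τ hτ
  have hcast : (j : ℝ) - (i : ℝ) = ((j - i : ℕ) : ℝ) := by
    rw [Nat.cast_sub hij.le]
  rw [hcast]
  have hceil : ⌈Real.logb 2 ((j - i : ℕ) : ℝ)⌉ = Nat.clog 2 (j - i) := by
    rw [show ((2 : ℝ)) = ((2 : ℕ) : ℝ) by norm_num,
      Real.ceil_logb_natCast (Nat.cast_nonneg _), Int.clog_natCast]
  rw [hceil]
  unfold hdiff at hb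
  exact_mod_cast hb
end

section
/- Let F be the function from the positive integers to the positive integers defined by F(1) = 1 and F(ℓ) = 2F(⌊ℓ/2⌋) + F(⌈ℓ/2⌉) for ℓ ≥ 2. Then F is nondecreasing and F(ℓ) ≤ (2ℓ)^{log₂ 3} for every integer ℓ ≥ 1. -/
/-- For `F` with `F(1) = 1` and `F(ℓ) = 2F(⌊ℓ/2⌋) + F(⌈ℓ/2⌉)` for `ℓ ≥ 2`,
`F` is nondecreasing (on the positive integers) and `F(ℓ) ≤ (2ℓ)^(log₂ 3)` for `ℓ ≥ 1`. -/
theorem stmt_4 (F : ℕ → ℕ) (h1 : F 1 = 1)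
    (hrec : ∀ ℓ : ℕ, 2 ≤ ℓ → F ℓ = 2 * F (ℓ / 2) + F ((ℓ + 1) / 2)) :
    (∀ a b : ℕ, 1 ≤ a → a ≤ b → F a ≤ F b) ∧
    ∀ ℓ : ℕ, 1 ≤ ℓ → (F ℓ : ℝ) ≤ (2 * (ℓ : ℝ)) ^ (Real.logb 2 3) := by
  have key : ∀ ℓ : ℕ, 1 ≤ ℓ → F ℓ ≤ F (ℓ + 1) := by
    intro ℓ
    induction ℓ using Nat.strong_induction_on with
    | _ ℓ ih =>
      intro hℓ
      rcases eq_or_lt_of_le hℓ with h | h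
      · rw [← h]
        have := hrec 2 (by norm_num)
        norm_num at this ⊢
        omega
      · have h2 : 2 ≤ ℓ := h
        have e1 := hrec ℓ h2
        have e2 := hrec (ℓ + 1) (by omega)
        rcases Nat.even_or_odd ℓ with ⟨m, hm⟩ | ⟨m, hm⟩
        · have hm1 : 1 ≤ m := by omega
          have hstep := ih m (by omega) hm1
          have d1 : ℓ / 2 = m := by omega
          have d2 : (ℓ + 1) / 2 = m := by omega
          have d3 : (ℓ + 1 + 1) / 2 = m + 1 := by omega
          rw [d1, d2] at e1
          rw [d2, d3] at e2
          omega
        · have hm1 : 1 ≤ m := by omega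
          have hstep := ih m (by omega) hm1
          have d1 : ℓ / 2 = m := by omega
          have d2 : (ℓ + 1) / 2 = m + 1 := by omega
          have d3 : (ℓ + 1 + 1) / 2 = m + 1 := by omega
          rw [d1, d2] at e1
          rw [d2, d3] at e2
          omega
  have mono : ∀ a b : ℕ, 1 ≤ a → a ≤ b → F a ≤ F b := by
    intro a b ha hab
    induction b, hab using Nat.le_induction with
    | base => exact le_refl _
    | succ n hn ihn => exact le_trans ihn (key n (le_trans ha hn))
  refine ⟨mono, ?_⟩
  have hpow : ∀ k : ℕ, F (2 ^ k) = 3 ^ k := by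
    intro k
    induction k with
    | zero => simpa using h1
    | succ k ihk =>
      have h2k : 2 ^ (k + 1) = 2 * 2 ^ k := by ring
      have e := hrec (2 ^ (k + 1)) (by
        have : 1 ≤ 2 ^ k := Nat.one_le_two_pow
        omega)
      have d1 : 2 ^ (k + 1) / 2 = 2 ^ k := by omega
      have d2 : (2 ^ (k + 1) + 1) / 2 = 2 ^ k := by
        have : 1 ≤ 2 ^ k := Nat.one_le_two_pow
        omega
      rw [d1, d2, ihk] at e
      rw [e]; ring
  intro ℓ hℓ
  set k := Nat.clog 2 ℓ with hk
  have hle : ℓ ≤ 2 ^ k := Nat.le_pow_clog (by norm_num) ℓ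
  have h2k : 2 ^ k ≤ 2 * ℓ := by
    rcases eq_or_lt_of_le hℓ with h | h
    · rw [hk, ← h]; norm_num
    · have h2 : 2 ≤ ℓ := h
      have hlt : 2 ^ (k - 1) < ℓ := Nat.pow_pred_clog_lt_self (by norm_num) h2
      have hk1 : 1 ≤ k := by
        by_contra h0
        have hk0 : k = 0 := by omega
        rw [hk0] at hle
        norm_num at hle
        omega
      have : 2 ^ k = 2 * 2 ^ (k - 1) := by
        conv_lhs => rw [show k = (k - 1) + 1 by omega]
        ring
      omega
  have hF : F ℓ ≤ 3 ^ k := by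
    rw [← hpow k]; exact mono ℓ (2 ^ k) hℓ hle
  have hcast : (F ℓ : ℝ) ≤ ((3 : ℝ)) ^ k := by exact_mod_cast hF
  have hexp0 : (0 : ℝ) ≤ Real.logb 2 3 :=
    Real.logb_nonneg (by norm_num) (by norm_num)
  have e3 : ((2 : ℝ) ^ k) ^ Real.logb 2 3 = (3 : ℝ) ^ k := by
    rw [← Real.rpow_natCast 2 k, ← Real.rpow_mul (by norm_num), mul_comm,
      Real.rpow_mul (by norm_num), Real.rpow_logb (by norm_num) (by norm_num) (by norm_num),
      Real.rpow_natCast]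
  calc (F ℓ : ℝ) ≤ (3 : ℝ) ^ k := hcast
    _ = ((2 : ℝ) ^ k) ^ Real.logb 2 3 := e3.symm
    _ ≤ (2 * (ℓ : ℝ)) ^ Real.logb 2 3 := by
        apply Real.rpow_le_rpow (by positivity) _ hexp0
        exact_mod_cast h2k
end

section
/- Let L ≥ 1 be an integer and let p be as in the explicit parallel-tempering construction. Then for every i ∈ {0,…,L}: p(i, i+1) > 1 − 1/(L+1), and for every k ∈ {1,…,m} with k ≠ i+1: 1/(2(L+1)³) < p(i,k) < 1/(L+1)². -/
/-- The unnormalized weight `N(i,k) = γ^(2(i+1)k − k² + 1) + Σ_{r=0}^{L} γ^((2r+1)(i+1) − r² − r)`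
with `γ = (L+1)³`, of the explicit parallel-tempering construction. -/
noncomputable def NPT (L i k : ℕ) : ℝ :=
  (((L : ℝ) + 1) ^ 3) ^ (2 * ((i : ℤ) + 1) * (k : ℤ) - (k : ℤ) ^ 2 + 1) +
    ∑ r ∈ Finset.range (L + 1),
      (((L : ℝ) + 1) ^ 3) ^ ((2 * (r : ℤ) + 1) * ((i : ℤ) + 1) - (r : ℤ) ^ 2 - (r : ℤ))

/-- `p(i,k) = N(i,k) / Σ_{h=1}^{m} N(i,h)` with `m = L+1`: the probability vector of the
explicit parallel-tempering construction. -/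
noncomputable def pPT (L i k : ℕ) : ℝ := NPT L i k / ∑ h ∈ Finset.Icc 1 (L + 1), NPT L i h

/-- The exponent of the first term of `N(i,k)` is at most `(i+1)²` when `k ≠ i+1`. -/
lemma exp_e_le (i k : ℕ) (hk : k ≠ i + 1) :
    2 * ((i : ℤ) + 1) * (k : ℤ) - (k : ℤ) ^ 2 + 1 ≤ ((i : ℤ) + 1) ^ 2 := by
  have hz : (k : ℤ) - ((i : ℤ) + 1) ≠ 0 := by
    intro h
    apply hk
    have : (k : ℤ) = ((i : ℤ) + 1) := by linarith
    exact_mod_cast this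
  have h1 : 1 ≤ ((k : ℤ) - ((i : ℤ) + 1)) ^ 2 := by
    rcases hz.lt_or_gt with h | h
    · nlinarith
    · nlinarith
  nlinarith

/-- The exponents in the sum `S` are at most `(i+1)²`. -/
lemma exp_s_le (i r : ℕ) :
    (2 * (r : ℤ) + 1) * ((i : ℤ) + 1) - (r : ℤ) ^ 2 - (r : ℤ) ≤ ((i : ℤ) + 1) ^ 2 := by
  have h : 0 ≤ ((r : ℤ) - (i : ℤ)) * ((r : ℤ) - (i : ℤ) - 1) := by
    rcases le_or_gt ((r : ℤ) - (i : ℤ)) 0 with h | h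
    · nlinarith
    · have : 1 ≤ (r : ℤ) - (i : ℤ) := h
      nlinarith
  nlinarith

/-- Arithmetic for the main diagonal bound. -/
lemma arith_main (ℓ c g x S E : ℝ) (hℓ : 1 ≤ ℓ) (hc : c = ℓ + 1) (hg : g = c ^ 3)
    (hx : 0 < x) (hS1 : x ≤ S) (hS2 : S ≤ c * x) (hE2 : E ≤ g * x + ℓ * x) :
    ℓ * (E + c * S) < (g * x + S) * c := by
  subst hg; subst hc
  have h1 : ℓ * E ≤ ℓ * ((ℓ + 1) ^ 3 * x + ℓ * x) :=
    mul_le_mul_of_nonneg_left hE2 (by linarith)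
  have h2 : (ℓ * (ℓ + 1)) * S ≤ (ℓ * (ℓ + 1)) * ((ℓ + 1) * x) :=
    mul_le_mul_of_nonneg_left hS2 (by nlinarith)
  have h3 : (ℓ + 1) * x ≤ (ℓ + 1) * S := mul_le_mul_of_nonneg_left hS1 (by linarith)
  have h4 : 0 < (3 * ℓ + 2) * x := by nlinarith
  nlinarith [h1, h2, h3, h4]

/-- Arithmetic for the off-diagonal lower bound. -/
lemma arith_low (ℓ c g x S E y : ℝ) (hℓ : 1 ≤ ℓ) (hc : c = ℓ + 1) (hg : g = c ^ 3)
    (hx : 0 < x) (hy : 0 < y) (hS1 : x ≤ S) (hS2 : S ≤ c * x)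
    (hE2 : E ≤ g * x + ℓ * x) :
    E + c * S < (y + S) * (2 * g) := by
  subst hg; subst hc
  have h2 : (ℓ + 1) * S ≤ (ℓ + 1) * ((ℓ + 1) * x) :=
    mul_le_mul_of_nonneg_left hS2 (by linarith)
  have hp : (0:ℝ) < (ℓ + 1) ^ 3 := pow_pos (by linarith) 3
  have h3 : (2 * (ℓ + 1) ^ 3) * x ≤ (2 * (ℓ + 1) ^ 3) * S :=
    mul_le_mul_of_nonneg_left hS1 (by linarith)
  have h4 : 0 < (2 * (ℓ + 1) ^ 3) * y := mul_pos (by linarith) hy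
  have h5 : 0 ≤ (ℓ * (ℓ ^ 2 + 2 * ℓ)) * x := by nlinarith
  nlinarith [hE2, h2, h3, h4, h5]

/-- Arithmetic for the off-diagonal upper bound. -/
lemma arith_up (c g x S E y : ℝ) (hc1 : 1 ≤ c) (hg : g = c ^ 3)
    (hx : 0 < x) (hyx : y ≤ x) (hS2 : S ≤ c * x) (hE3 : g * x + y ≤ E) :
    (y + S) * c ^ 2 < E + c * S := by
  subst hg
  have p1 : (c ^ 2 - 1) * y ≤ (c ^ 2 - 1) * x :=
    mul_le_mul_of_nonneg_left hyx (by nlinarith)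
  have p2 : (c ^ 2 - c) * S ≤ (c ^ 2 - c) * (c * x) :=
    mul_le_mul_of_nonneg_left hS2 (by nlinarith)
  nlinarith [hE3, p1, p2, hx]
/-- `p(i, i+1) > 1 − 1/(L+1)`, and for `k ≠ i+1`,
`1/(2(L+1)³) < p(i,k) < 1/(L+1)²`. -/
theorem stmt_10 (L : ℕ) (hL : 1 ≤ L) (i : ℕ) (hi : i ≤ L) :
    pPT L i (i + 1) > 1 - 1 / ((L : ℝ) + 1) ∧
    ∀ k : ℕ, 1 ≤ k → k ≤ L + 1 → k ≠ i + 1 →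
      1 / (2 * ((L : ℝ) + 1) ^ 3) < pPT L i k ∧ pPT L i k < 1 / ((L : ℝ) + 1) ^ 2 := by
  have hL1 : (1 : ℝ) ≤ (L : ℝ) := by exact_mod_cast hL
  have hg1' : (1 : ℝ) < ((L : ℝ) + 1) ^ 3 := by
    have h : (1 : ℝ) < (L : ℝ) + 1 := by linarith
    calc (1:ℝ) = 1 ^ 3 := by norm_num
      _ < ((L : ℝ) + 1) ^ 3 := by gcongr <;> norm_num
  set g : ℝ := ((L : ℝ) + 1) ^ 3 with hgdef
  have hg1 : (1 : ℝ) < g := hg1'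
  have hg0 : (0 : ℝ) < g := lt_trans one_pos hg1
  set c : ℝ := (L : ℝ) + 1 with hcdef
  have hc0 : (0 : ℝ) < c := by rw [hcdef]; linarith
  have hc1 : (1 : ℝ) ≤ c := by rw [hcdef]; linarith
  have hgc : g = c ^ 3 := by rw [hgdef, hcdef]
  -- abbreviations
  set x : ℝ := g ^ (((i : ℤ) + 1) ^ 2) with hxdef
  have hx0 : 0 < x := zpow_pos hg0 _
  set S : ℝ := ∑ r ∈ Finset.range (L + 1),
      g ^ ((2 * (r : ℤ) + 1) * ((i : ℤ) + 1) - (r : ℤ) ^ 2 - (r : ℤ)) with hSdef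
  set E : ℝ := ∑ h ∈ Finset.Icc 1 (L + 1),
      g ^ (2 * ((i : ℤ) + 1) * (h : ℤ) - (h : ℤ) ^ 2 + 1) with hEdef
  have hmono : ∀ a b : ℤ, a ≤ b → g ^ a ≤ g ^ b := fun a b h => zpow_le_zpow_right₀ hg1.le h
  -- top exponent value
  have hgx : g ^ (2 * ((i : ℤ) + 1) * ((i + 1 : ℕ) : ℤ) - ((i + 1 : ℕ) : ℤ) ^ 2 + 1) = g * x := by
    have h1 : 2 * ((i : ℤ) + 1) * ((i + 1 : ℕ) : ℤ) - ((i + 1 : ℕ) : ℤ) ^ 2 + 1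
        = 1 + ((i : ℤ) + 1) ^ 2 := by push_cast; ring
    rw [hxdef, h1, zpow_one_add₀ (ne_of_gt hg0)]
  -- bounds on S
  have hS_le : S ≤ c * x := by
    have h1 : S ≤ ∑ _r ∈ Finset.range (L + 1), x :=
      Finset.sum_le_sum fun r _ => hmono _ _ (exp_s_le i r)
    rw [Finset.sum_const, Finset.card_range, nsmul_eq_mul] at h1
    rw [hcdef]; push_cast at h1 ⊢; linarith
  have hS_ge : x ≤ S := by
    have hmem : i ∈ Finset.range (L + 1) := Finset.mem_range.mpr (by omega)
    have h1 : g ^ ((2 * (i : ℤ) + 1) * ((i : ℤ) + 1) - (i : ℤ) ^ 2 - (i : ℤ)) ≤ S :=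
      Finset.single_le_sum
        (f := fun r : ℕ => g ^ ((2 * (r : ℤ) + 1) * ((i : ℤ) + 1) - (r : ℤ) ^ 2 - (r : ℤ)))
        (fun r _ => (zpow_pos hg0 _).le) hmem
    have h2 : (2 * (i : ℤ) + 1) * ((i : ℤ) + 1) - (i : ℤ) ^ 2 - (i : ℤ) = ((i : ℤ) + 1) ^ 2 := by
      ring
    rw [h2] at h1
    exact h1
  have hS0 : 0 < S := lt_of_lt_of_le hx0 hS_ge
  -- membership facts
  have hmem1 : i + 1 ∈ Finset.Icc 1 (L + 1) := Finset.mem_Icc.mpr ⟨by omega, by omega⟩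
  -- lower bound on E
  have hE_ge : g * x ≤ E := by
    have h1 : g ^ (2 * ((i : ℤ) + 1) * ((i + 1 : ℕ) : ℤ) - ((i + 1 : ℕ) : ℤ) ^ 2 + 1) ≤ E :=
      Finset.single_le_sum
        (f := fun h : ℕ => g ^ (2 * ((i : ℤ) + 1) * (h : ℤ) - (h : ℤ) ^ 2 + 1))
        (fun h _ => (zpow_pos hg0 _).le) hmem1
    rw [hgx] at h1
    exact h1
  -- upper bound on E
  have hE_le : E ≤ g * x + (L : ℝ) * x := by
    have hsplit : g ^ (2 * ((i : ℤ) + 1) * ((i + 1 : ℕ) : ℤ) - ((i + 1 : ℕ) : ℤ) ^ 2 + 1)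
        + ∑ h ∈ (Finset.Icc 1 (L + 1)).erase (i + 1),
            g ^ (2 * ((i : ℤ) + 1) * (h : ℤ) - (h : ℤ) ^ 2 + 1) = E :=
      Finset.add_sum_erase _
        (fun h : ℕ => g ^ (2 * ((i : ℤ) + 1) * (h : ℤ) - (h : ℤ) ^ 2 + 1)) hmem1
    have hcard : ((Finset.Icc 1 (L + 1)).erase (i + 1)).card = L := by
      rw [Finset.card_erase_of_mem hmem1, Nat.card_Icc]; omega
    have h2 : ∑ h ∈ (Finset.Icc 1 (L + 1)).erase (i + 1),
        g ^ (2 * ((i : ℤ) + 1) * (h : ℤ) - (h : ℤ) ^ 2 + 1) ≤ (L : ℝ) * x := by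
      have h3 : ∑ h ∈ (Finset.Icc 1 (L + 1)).erase (i + 1),
          g ^ (2 * ((i : ℤ) + 1) * (h : ℤ) - (h : ℤ) ^ 2 + 1)
          ≤ ∑ _h ∈ (Finset.Icc 1 (L + 1)).erase (i + 1), x := by
        refine Finset.sum_le_sum fun h hh => hmono _ _ (exp_e_le i h ?_)
        exact (Finset.mem_erase.mp hh).1
      rw [Finset.sum_const, hcard, nsmul_eq_mul] at h3
      exact h3
    rw [← hsplit, hgx]
    linarith
  -- the denominator
  have hN_eq : ∀ k : ℕ, NPT L i k
      = g ^ (2 * ((i : ℤ) + 1) * (k : ℤ) - (k : ℤ) ^ 2 + 1) + S := fun k => rfl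
  have hD_eq : ∑ h ∈ Finset.Icc 1 (L + 1), NPT L i h = E + c * S := by
    rw [Finset.sum_congr rfl fun h _ => hN_eq h, Finset.sum_add_distrib, Finset.sum_const,
      Nat.card_Icc, nsmul_eq_mul]
    have h4 : L + 1 + 1 - 1 = L + 1 := by omega
    rw [h4, hcdef]
    push_cast
    ring
  have hD_pos : 0 < E + c * S := by nlinarith [mul_pos hg0 hx0, mul_pos hc0 hS0]
  constructor
  · -- p(i, i+1) > 1 - 1/(L+1)
    rw [pPT, hD_eq, hN_eq, hgx]
    have h1 : 1 - 1 / c = (L : ℝ) / c := by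
      rw [hcdef]; field_simp; ring
    rw [gt_iff_lt, h1, div_lt_div_iff₀ hc0 hD_pos]
    exact arith_main (L : ℝ) c g x S E hL1 hcdef hgc hx0 hS_ge hS_le hE_le
  · intro k hk1 hk2 hkne
    have hy_le : g ^ (2 * ((i : ℤ) + 1) * (k : ℤ) - (k : ℤ) ^ 2 + 1) ≤ x :=
      hmono _ _ (exp_e_le i k hkne)
    have hy0 : 0 < g ^ (2 * ((i : ℤ) + 1) * (k : ℤ) - (k : ℤ) ^ 2 + 1) := zpow_pos hg0 _
    set y : ℝ := g ^ (2 * ((i : ℤ) + 1) * (k : ℤ) - (k : ℤ) ^ 2 + 1) with hydef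
    -- E ≥ g*x + y
    have hE_ge2 : g * x + y ≤ E := by
      have hsub : ({i + 1, k} : Finset ℕ) ⊆ Finset.Icc 1 (L + 1) := by
        intro a ha
        rcases Finset.mem_insert.mp ha with h | h
        · subst h; exact hmem1
        · rw [Finset.mem_singleton] at h; subst h
          exact Finset.mem_Icc.mpr ⟨hk1, hk2⟩
      have hpair : ∑ h ∈ ({i + 1, k} : Finset ℕ),
          g ^ (2 * ((i : ℤ) + 1) * (h : ℤ) - (h : ℤ) ^ 2 + 1) = g * x + y := by
        rw [Finset.sum_pair (fun h => hkne h.symm), hgx]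
      calc g * x + y = ∑ h ∈ ({i + 1, k} : Finset ℕ),
            g ^ (2 * ((i : ℤ) + 1) * (h : ℤ) - (h : ℤ) ^ 2 + 1) := hpair.symm
        _ ≤ E := Finset.sum_le_sum_of_subset_of_nonneg hsub
            (fun h _ _ => (zpow_pos hg0 _).le)
    constructor
    · -- 1/(2g) < p(i,k)
      rw [pPT, hD_eq, hN_eq]
      rw [div_lt_div_iff₀ (by linarith) hD_pos, one_mul]
      exact arith_low (L : ℝ) c g x S E y hL1 hcdef hgc hx0 hy0 hS_ge hS_le hE_le
    · -- p(i,k) < 1/(L+1)^2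
      rw [pPT, hD_eq, hN_eq]
      rw [div_lt_div_iff₀ hD_pos (pow_pos hc0 2), one_mul]
      exact arith_up c g x S E y hc1 hgc hx0 hy_le hS_le hE_ge2
end

section
/- Let L ≥ 1 be an integer and let p be as in the explicit parallel-tempering construction. Then for every i ∈ {1,…,L} and k ∈ {1,…,m}: (a) if k ∉ {i, i+1, i+2} then p(i−1,k)/p(i,k) > 1 − 1/(L+1); (b) if k = i then p(i−1,k)/p(i,k) > 1; (c) if k = i+1 then p(i−1,k)/p(i,k) > 1/(2(L+1)³); (d) if k = i+2 (and i+2 ≤ m) then p(i−1,k)/p(i,k) > (2/3)(1 − 1/(L+1)). -/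
noncomputable def gPT (L : ℕ) : ℝ := ((L : ℝ) + 1) ^ 3

noncomputable def SPT (L i : ℕ) : ℝ :=
  ∑ r ∈ Finset.range (L + 1),
      (((L : ℝ) + 1) ^ 3) ^ ((2 * (r : ℤ) + 1) * ((i : ℤ) + 1) - (r : ℤ) ^ 2 - (r : ℤ))

lemma gPT_pos (L : ℕ) : 0 < gPT L := by unfold gPT; positivity

lemma gPT_one_le (L : ℕ) : 1 ≤ gPT L := by
  unfold gPT
  have h : (0:ℝ) ≤ (L:ℝ) := Nat.cast_nonneg L
  nlinarith [sq_nonneg ((L:ℝ)+1), sq_nonneg (L:ℝ)]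

lemma NPT_eq (L i k : ℕ) :
    NPT L i k = gPT L ^ (2 * ((i : ℤ) + 1) * (k : ℤ) - (k : ℤ) ^ 2 + 1) + SPT L i := rfl

lemma SPT_pos (L i : ℕ) : 0 < SPT L i := by
  unfold SPT
  apply Finset.sum_pos (fun r _ => zpow_pos (by positivity) _)
  exact ⟨0, Finset.mem_range.mpr (by omega)⟩

lemma NPT_pos (L i k : ℕ) : 0 < NPT L i k := by
  rw [NPT_eq]
  have := SPT_pos L i
  have : (0:ℝ) < gPT L ^ (2 * ((i : ℤ) + 1) * (k : ℤ) - (k : ℤ) ^ 2 + 1) :=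
    zpow_pos (gPT_pos L) _
  linarith [SPT_pos L i]

lemma DPT_pos (L i : ℕ) : 0 < ∑ h ∈ Finset.Icc 1 (L + 1), NPT L i h := by
  apply Finset.sum_pos (fun h _ => NPT_pos L i h)
  exact ⟨1, Finset.mem_Icc.mpr (by omega)⟩

/-- lower bound for `SPT L j` when `j+1 ≤ L`: the two dominant terms. -/
lemma SPT_lb (L j : ℕ) (hj : j + 1 ≤ L) :
    2 * gPT L ^ (((j : ℤ) + 1) ^ 2) ≤ SPT L j := by
  have hg := gPT_pos L
  have hsub : ({j, j + 1} : Finset ℕ) ⊆ Finset.range (L + 1) := by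
    intro r hr
    simp only [Finset.mem_insert, Finset.mem_singleton] at hr
    rcases hr with rfl | rfl <;> exact Finset.mem_range.mpr (by omega)
  calc 2 * gPT L ^ (((j : ℤ) + 1) ^ 2)
      = ∑ r ∈ ({j, j + 1} : Finset ℕ),
          gPT L ^ ((2 * (r : ℤ) + 1) * ((j : ℤ) + 1) - (r : ℤ) ^ 2 - (r : ℤ)) := by
        rw [Finset.sum_pair (by omega : j ≠ j + 1), two_mul]
        congr 1 <;> (congr 1; push_cast; ring)
    _ ≤ SPT L j := by
        unfold SPT gPT
        exact Finset.sum_le_sum_of_subset_of_nonneg hsub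
          (fun r _ _ => le_of_lt (zpow_pos (by positivity) _))

/-- upper bound for `SPT L i`. -/
lemma SPT_ub (L i : ℕ) :
    SPT L i ≤ 2 * gPT L ^ (((i : ℤ) + 1) ^ 2)
      + ((L : ℝ) + 1) * gPT L ^ (((i : ℤ) + 1) ^ 2 - 2) := by
  have hg := gPT_pos L
  have h1 := gPT_one_le L
  have key : ∀ r ∈ Finset.range (L + 1),
      gPT L ^ ((2 * (r : ℤ) + 1) * ((i : ℤ) + 1) - (r : ℤ) ^ 2 - (r : ℤ)) ≤
      (if r = i ∨ r = i + 1 then gPT L ^ (((i : ℤ) + 1) ^ 2) else 0)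
        + gPT L ^ (((i : ℤ) + 1) ^ 2 - 2) := by
    intro r _
    by_cases hr : r = i ∨ r = i + 1
    · rw [if_pos hr]
      have hle : (2 * (r : ℤ) + 1) * ((i : ℤ) + 1) - (r : ℤ) ^ 2 - (r : ℤ)
          ≤ ((i : ℤ) + 1) ^ 2 := by
        rcases le_or_gt ((i : ℤ) + 1) (r : ℤ) with h | h <;> nlinarith
      have := zpow_le_zpow_right₀ h1 hle
      have hpos : (0:ℝ) < gPT L ^ (((i : ℤ) + 1) ^ 2 - 2) := zpow_pos hg _
      linarith
    · rw [if_neg hr]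
      push_neg at hr
      have hri : (r : ℤ) ≤ (i : ℤ) - 1 ∨ (i : ℤ) + 2 ≤ (r : ℤ) := by omega
      have hle : (2 * (r : ℤ) + 1) * ((i : ℤ) + 1) - (r : ℤ) ^ 2 - (r : ℤ)
          ≤ ((i : ℤ) + 1) ^ 2 - 2 := by
        rcases hri with h | h <;> nlinarith
      have := zpow_le_zpow_right₀ h1 hle
      linarith
  calc SPT L i ≤ ∑ r ∈ Finset.range (L + 1),
      ((if r = i ∨ r = i + 1 then gPT L ^ (((i : ℤ) + 1) ^ 2) else 0)
        + gPT L ^ (((i : ℤ) + 1) ^ 2 - 2)) := by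
        unfold SPT gPT at *
        exact Finset.sum_le_sum key
    _ = (∑ r ∈ Finset.range (L + 1),
          if r = i ∨ r = i + 1 then gPT L ^ (((i : ℤ) + 1) ^ 2) else 0)
        + (L + 1 : ℕ) • gPT L ^ (((i : ℤ) + 1) ^ 2 - 2) := by
        rw [Finset.sum_add_distrib, Finset.sum_const, Finset.card_range]
    _ ≤ 2 * gPT L ^ (((i : ℤ) + 1) ^ 2)
        + ((L : ℝ) + 1) * gPT L ^ (((i : ℤ) + 1) ^ 2 - 2) := by
        have hpos : (0:ℝ) < gPT L ^ (((i : ℤ) + 1) ^ 2) := zpow_pos hg _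
        have h2 : (∑ r ∈ Finset.range (L + 1),
            if r = i ∨ r = i + 1 then gPT L ^ (((i : ℤ) + 1) ^ 2) else 0)
            ≤ 2 * gPT L ^ (((i : ℤ) + 1) ^ 2) := by
          rw [← Finset.sum_filter]
          rw [Finset.sum_const, nsmul_eq_mul]
          have hcard : ((Finset.range (L + 1)).filter (fun r => r = i ∨ r = i + 1)).card ≤ 2 := by
            have hss : ((Finset.range (L + 1)).filter (fun r => r = i ∨ r = i + 1))
                ⊆ {i, i + 1} := by
              intro r hr
              simp only [Finset.mem_filter] at hr
              simp only [Finset.mem_insert, Finset.mem_singleton]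
              exact hr.2
            calc _ ≤ ({i, i+1} : Finset ℕ).card := Finset.card_le_card hss
              _ ≤ 2 := by
                apply le_trans (Finset.card_insert_le _ _); simp
          have : (((Finset.range (L + 1)).filter (fun r => r = i ∨ r = i + 1)).card : ℝ) ≤ 2 := by
            exact_mod_cast hcard
          nlinarith
        have h3 : ((L + 1 : ℕ) : ℝ) • gPT L ^ (((i : ℤ) + 1) ^ 2 - 2)
            = ((L : ℝ) + 1) * gPT L ^ (((i : ℤ) + 1) ^ 2 - 2) := by
          rw [smul_eq_mul]; push_cast; ring
        rw [← Nat.cast_smul_eq_nsmul ℝ]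
        rw [h3]
        linarith


/-- lower bound for the normalizing sum. -/
lemma DPT_lb (L i : ℕ) (hi : i ≤ L) :
    gPT L ^ (((i : ℤ) + 1) ^ 2 + 1) ≤ ∑ h ∈ Finset.Icc 1 (L + 1), NPT L i h := by
  have hmem : i + 1 ∈ Finset.Icc 1 (L + 1) := Finset.mem_Icc.mpr (by omega)
  have h1 : gPT L ^ (((i : ℤ) + 1) ^ 2 + 1) ≤ NPT L i (i + 1) := by
    rw [NPT_eq]
    have he : gPT L ^ (((i : ℤ) + 1) ^ 2 + 1)
        = gPT L ^ (2 * ((i : ℤ) + 1) * ((i + 1 : ℕ) : ℤ) - ((i + 1 : ℕ) : ℤ) ^ 2 + 1) := by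
      congr 1; push_cast; ring
    rw [he]
    linarith [SPT_pos L i]
  exact h1.trans (Finset.single_le_sum (fun h _ => (NPT_pos L i h).le) hmem)

/-- upper bound for the normalizing sum. -/
lemma DPT_ub (L i : ℕ) :
    ∑ h ∈ Finset.Icc 1 (L + 1), NPT L i h ≤
      gPT L ^ (((i : ℤ) + 1) ^ 2 + 1) + 2 * gPT L ^ (((i : ℤ) + 1) ^ 2)
        + ((L : ℝ) + 1) * gPT L ^ (((i : ℤ) + 1) ^ 2 - 3)
        + ((L : ℝ) + 1) * SPT L i := by
  have hg := gPT_pos L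
  have h1 := gPT_one_le L
  have hsplit : ∑ h ∈ Finset.Icc 1 (L + 1), NPT L i h
      = (∑ h ∈ Finset.Icc 1 (L + 1),
          gPT L ^ (2 * ((i : ℤ) + 1) * (h : ℤ) - (h : ℤ) ^ 2 + 1))
        + ((L : ℝ) + 1) * SPT L i := by
    have : ∀ h ∈ Finset.Icc 1 (L+1), NPT L i h
        = gPT L ^ (2 * ((i : ℤ) + 1) * (h : ℤ) - (h : ℤ) ^ 2 + 1) + SPT L i :=
      fun h _ => NPT_eq L i h
    rw [Finset.sum_congr rfl this, Finset.sum_add_distrib, Finset.sum_const, Nat.card_Icc]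
    have : (L + 1 + 1 - 1) = L + 1 := by omega
    rw [this, ← Nat.cast_smul_eq_nsmul ℝ, smul_eq_mul]
    push_cast; ring
  rw [hsplit]
  have key : ∀ h ∈ Finset.Icc 1 (L + 1),
      gPT L ^ (2 * ((i : ℤ) + 1) * (h : ℤ) - (h : ℤ) ^ 2 + 1) ≤
      (if h = i + 1 then gPT L ^ (((i : ℤ) + 1) ^ 2 + 1) else 0)
        + ((if h = i ∨ h = i + 2 then gPT L ^ (((i : ℤ) + 1) ^ 2) else 0)
          + gPT L ^ (((i : ℤ) + 1) ^ 2 - 3)) := by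
    intro h _
    have hp3 : (0:ℝ) < gPT L ^ (((i : ℤ) + 1) ^ 2 - 3) := zpow_pos hg _
    by_cases h1' : h = i + 1
    · subst h1'
      rw [if_pos rfl, if_neg (by omega)]
      have he : gPT L ^ (2 * ((i : ℤ) + 1) * ((i + 1 : ℕ) : ℤ) - ((i + 1 : ℕ) : ℤ) ^ 2 + 1)
          = gPT L ^ (((i : ℤ) + 1) ^ 2 + 1) := by congr 1; push_cast; ring
      rw [he]; linarith
    · rw [if_neg h1']
      by_cases h2' : h = i ∨ h = i + 2
      · rw [if_pos h2']
        have he : 2 * ((i : ℤ) + 1) * (h : ℤ) - (h : ℤ) ^ 2 + 1 = ((i : ℤ) + 1) ^ 2 := by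
          rcases h2' with rfl | rfl <;> push_cast <;> ring
        rw [he]; linarith
      · rw [if_neg h2']
        push_neg at h2'
        have hri : (h : ℤ) ≤ (i : ℤ) - 1 ∨ (i : ℤ) + 3 ≤ (h : ℤ) := by omega
        have hle : 2 * ((i : ℤ) + 1) * (h : ℤ) - (h : ℤ) ^ 2 + 1 ≤ ((i : ℤ) + 1) ^ 2 - 3 := by
          rcases hri with h' | h' <;> nlinarith
        have := zpow_le_zpow_right₀ h1 hle
        linarith
  have hsum := Finset.sum_le_sum key
  rw [Finset.sum_add_distrib, Finset.sum_add_distrib] at hsum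
  have e1 : (∑ h ∈ Finset.Icc 1 (L + 1),
      if h = i + 1 then gPT L ^ (((i : ℤ) + 1) ^ 2 + 1) else 0)
      ≤ gPT L ^ (((i : ℤ) + 1) ^ 2 + 1) := by
    rw [Finset.sum_ite_eq' (Finset.Icc 1 (L + 1)) (i + 1)
      (fun _ => gPT L ^ (((i : ℤ) + 1) ^ 2 + 1))]
    split_ifs
    · exact le_refl _
    · positivity
  have e2 : (∑ h ∈ Finset.Icc 1 (L + 1),
      if h = i ∨ h = i + 2 then gPT L ^ (((i : ℤ) + 1) ^ 2) else 0)
      ≤ 2 * gPT L ^ (((i : ℤ) + 1) ^ 2) := by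
    rw [← Finset.sum_filter, Finset.sum_const, nsmul_eq_mul]
    have hcard : ((Finset.Icc 1 (L + 1)).filter (fun h => h = i ∨ h = i + 2)).card ≤ 2 := by
      have hss : ((Finset.Icc 1 (L + 1)).filter (fun h => h = i ∨ h = i + 2))
          ⊆ {i, i + 2} := by
        intro r hr
        simp only [Finset.mem_filter] at hr
        simp only [Finset.mem_insert, Finset.mem_singleton]
        exact hr.2
      calc _ ≤ ({i, i + 2} : Finset ℕ).card := Finset.card_le_card hss
        _ ≤ 2 := by
          apply le_trans (Finset.card_insert_le _ _); simp
    have hc : (((Finset.Icc 1 (L + 1)).filter (fun h => h = i ∨ h = i + 2)).card : ℝ) ≤ 2 := by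
      exact_mod_cast hcard
    have hp : (0:ℝ) < gPT L ^ (((i : ℤ) + 1) ^ 2) := zpow_pos hg _
    nlinarith
  have e3 : (∑ _h ∈ Finset.Icc 1 (L + 1), gPT L ^ (((i : ℤ) + 1) ^ 2 - 3))
      ≤ ((L : ℝ) + 1) * gPT L ^ (((i : ℤ) + 1) ^ 2 - 3) := by
    rw [Finset.sum_const, Nat.card_Icc]
    have : (L + 1 + 1 - 1) = L + 1 := by omega
    rw [this, ← Nat.cast_smul_eq_nsmul ℝ, smul_eq_mul]
    push_cast
    exact le_refl _
  linarith

set_option maxHeartbeats 4000000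

/-- bounds on the ratios `p(i−1,k)/p(i,k)` for `i ∈ {1,…,L}`:
(a) if `k ∉ {i, i+1, i+2}` then the ratio is `> 1 − 1/(L+1)`; (b) if `k = i` it is `> 1`;
(c) if `k = i+1` it is `> 1/(2(L+1)³)`; (d) if `k = i+2` it is `> (2/3)(1 − 1/(L+1))`. -/
theorem stmt_11 (L : ℕ) (hL : 1 ≤ L) (i : ℕ) (hi1 : 1 ≤ i) (hiL : i ≤ L)
    (k : ℕ) (hk1 : 1 ≤ k) (hkm : k ≤ L + 1) :
    (k ≠ i ∧ k ≠ i + 1 ∧ k ≠ i + 2 →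
      pPT L (i - 1) k / pPT L i k > 1 - 1 / ((L : ℝ) + 1)) ∧
    (k = i → pPT L (i - 1) k / pPT L i k > 1) ∧
    (k = i + 1 → pPT L (i - 1) k / pPT L i k > 1 / (2 * ((L : ℝ) + 1) ^ 3)) ∧
    (k = i + 2 → pPT L (i - 1) k / pPT L i k > 2 / 3 * (1 - 1 / ((L : ℝ) + 1))) := by
  obtain ⟨j, rfl⟩ : ∃ j, i = j + 1 := ⟨i - 1, by omega⟩
  simp only [Nat.add_sub_cancel]
  set n : ℝ := (L : ℝ) + 1 with hn_def
  have hg := gPT_pos L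
  have hg1 := gPT_one_le L
  have hg0 : gPT L ≠ 0 := ne_of_gt hg
  have hg_eq : gPT L = n ^ 3 := by rw [hn_def]; rfl
  have hn2 : (2 : ℝ) ≤ n := by
    rw [hn_def]
    have : (1 : ℝ) ≤ (L : ℝ) := by exact_mod_cast hL
    linarith
  have hn0 : (0 : ℝ) < n := by linarith
  have hn0' : n ≠ 0 := ne_of_gt hn0
  set P : ℝ := gPT L ^ (((j : ℤ) + 1) ^ 2) with hP_def
  set Q : ℝ := gPT L ^ (((j : ℤ) + 2) ^ 2) with hQ_def
  clear_value n
  have hP : 0 < P := zpow_pos hg _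
  have hQ : 0 < Q := zpow_pos hg _
  clear_value P Q
  -- power helpers
  have hz1 : gPT L ^ (((j : ℤ) + 1) ^ 2 + 1) = P * n ^ 3 := by
    rw [hP_def, zpow_add_one₀ hg0, hg_eq]
  have hzm2 : gPT L ^ (((j : ℤ) + 2) ^ 2 - 2) = Q / n ^ 6 := by
    rw [hQ_def, zpow_sub₀ hg0, hg_eq]
    norm_num
    rw [show ((n^3)^2) = n^6 by ring]
  have hzm2' : gPT L ^ (((j : ℤ) + 1) ^ 2 - 2) = P / n ^ 6 := by
    rw [hP_def, zpow_sub₀ hg0, hg_eq]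
    rw [show ((n^3)^(2:ℤ)) = n^6 by rw [show (2:ℤ) = ((2:ℕ):ℤ) by norm_num, zpow_natCast]; ring]
  have hzm3 : gPT L ^ (((j : ℤ) + 1) ^ 2 - 3) = P / n ^ 9 := by
    rw [hP_def, zpow_sub₀ hg0, hg_eq]
    rw [show ((n^3)^(3:ℤ)) = n^9 by rw [show (3:ℤ) = ((3:ℕ):ℤ) by norm_num, zpow_natCast]; ring]
  have hzm3' : gPT L ^ (((j : ℤ) + 2) ^ 2 - 3) = Q / n ^ 9 := by
    rw [hQ_def, zpow_sub₀ hg0, hg_eq]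
    rw [show ((n^3)^(3:ℤ)) = n^9 by rw [show (3:ℤ) = ((3:ℕ):ℤ) by norm_num, zpow_natCast]; ring]
  have hpow6 : (2:ℝ) ^ 6 ≤ n ^ 6 := pow_le_pow_left₀ (by norm_num) hn2 6
  have hpow9 : (2:ℝ) ^ 9 ≤ n ^ 9 := pow_le_pow_left₀ (by norm_num) hn2 9
  -- lower bound for the i-level normalizer
  have hB : n ^ 3 * Q ≤ ∑ h ∈ Finset.Icc 1 (L + 1), NPT L (j + 1) h := by
    have h := DPT_lb L (j + 1) hiL
    have ecast : (((j + 1 : ℕ) : ℤ) + 1) ^ 2 = ((j : ℤ) + 2) ^ 2 := by push_cast; ring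
    rw [ecast, zpow_add_one₀ hg0, ← hQ_def, hg_eq] at h
    linarith
  -- upper bound for the (i-1)-level normalizer
  have hSj : SPT L j ≤ 2 * P + n * (P / n ^ 6) := by
    have h := SPT_ub L j
    rw [hzm2', ← hP_def, ← hn_def] at h
    exact h
  have hpow8 : (2:ℝ) ^ 8 ≤ n ^ 8 := pow_le_pow_left₀ (by norm_num) hn2 8
  have hpow5 : (2:ℝ) ^ 5 ≤ n ^ 5 := pow_le_pow_left₀ (by norm_num) hn2 5
  have hD : ∑ h ∈ Finset.Icc 1 (L + 1), NPT L j h ≤ P * (n ^ 3 + 2 * n + 3) := by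
    have h := DPT_ub L j
    rw [hz1, hzm3] at h
    rw [← hP_def, ← hn_def] at h
    have hterm1 : n * (P / n ^ 9) ≤ P / 2 := by
      rw [show n * (P / n ^ 9) = P / n ^ 8 by field_simp]
      apply div_le_div_of_nonneg_left hP.le (by norm_num)
      nlinarith [hpow8]
    have hterm2 : n * SPT L j ≤ 2 * n * P + P / 2 := by
      have h2 : n * SPT L j ≤ n * (2 * P + n * (P / n ^ 6)) :=
        mul_le_mul_of_nonneg_left hSj (le_of_lt hn0)
      have h3 : n * (n * (P / n ^ 6)) ≤ P / 2 := by
        rw [show n * (n * (P / n ^ 6)) = P / n ^ 4 by field_simp]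
        apply div_le_div_of_nonneg_left hP.le (by norm_num)
        nlinarith [sq_nonneg n]
      linarith
    have hexp : P * (n ^ 3 + 2 * n + 3) = P * n ^ 3 + 2 * n * P + 3 * P := by ring
    rw [hexp]
    linarith
  -- the generic ratio bound
  have main : ∀ (k' : ℕ) (α ξ c : ℝ), 0 ≤ c → 0 < ξ → α * P ≤ NPT L j k' →
      NPT L (j + 1) k' ≤ Q * ξ →
      c * (ξ * (n ^ 3 + 2 * n + 3)) < α * n ^ 3 →
      c < pPT L j k' / pPT L (j + 1) k' := by
    intro k' α ξ c hc hξ hA hC hnum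
    have hA0 : 0 < NPT L j k' := NPT_pos L j k'
    have hC0 : 0 < NPT L (j + 1) k' := NPT_pos L (j + 1) k'
    have hD0 : 0 < ∑ h ∈ Finset.Icc 1 (L + 1), NPT L j h := DPT_pos L j
    have hB0 : 0 < ∑ h ∈ Finset.Icc 1 (L + 1), NPT L (j + 1) h := DPT_pos L (j + 1)
    unfold pPT
    have hre : NPT L j k' / (∑ h ∈ Finset.Icc 1 (L + 1), NPT L j h)
        / (NPT L (j + 1) k' / (∑ h ∈ Finset.Icc 1 (L + 1), NPT L (j + 1) h))
        = NPT L j k' * (∑ h ∈ Finset.Icc 1 (L + 1), NPT L (j + 1) h)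
          / (NPT L (j + 1) k' * (∑ h ∈ Finset.Icc 1 (L + 1), NPT L j h)) := by
      have hD0' : (∑ h ∈ Finset.Icc 1 (L + 1), NPT L j h) ≠ 0 := ne_of_gt hD0
      have hB0' : (∑ h ∈ Finset.Icc 1 (L + 1), NPT L (j + 1) h) ≠ 0 := ne_of_gt hB0
      have hC0' : NPT L (j + 1) k' ≠ 0 := ne_of_gt hC0
      field_simp
    rw [hre, lt_div_iff₀ (by positivity)]
    calc c * (NPT L (j + 1) k' * ∑ h ∈ Finset.Icc 1 (L + 1), NPT L j h)
        ≤ c * (Q * ξ * (P * (n ^ 3 + 2 * n + 3))) := by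
          apply mul_le_mul_of_nonneg_left _ hc
          exact mul_le_mul hC hD hD0.le (by positivity)
      _ = (c * (ξ * (n ^ 3 + 2 * n + 3))) * (P * Q) := by ring
      _ < (α * n ^ 3) * (P * Q) := mul_lt_mul_of_pos_right hnum (by positivity)
      _ = (α * P) * (n ^ 3 * Q) := by ring
      _ ≤ NPT L j k' * ∑ h ∈ Finset.Icc 1 (L + 1), NPT L (j + 1) h :=
          mul_le_mul hA hB (by positivity) hA0.le
  -- upper bound for SPT at level j+1
  have hz1' : gPT L ^ (((j : ℤ) + 2) ^ 2 + 1) = Q * n ^ 3 := by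
    rw [hQ_def, zpow_add_one₀ hg0, hg_eq]
  have hSj1 : SPT L (j + 1) ≤ 2 * Q + n * (Q / n ^ 6) := by
    have h := SPT_ub L (j + 1)
    have ecast : (((j + 1 : ℕ) : ℤ) + 1) ^ 2 = ((j : ℤ) + 2) ^ 2 := by push_cast; ring
    rw [ecast, hzm2, ← hQ_def, ← hn_def] at h
    exact h
  have hsm : n * (Q / n ^ 6) ≤ Q / (2 * n ^ 2) := by
    rw [show n * (Q / n ^ 6) = Q / n ^ 5 by field_simp]
    apply div_le_div_of_nonneg_left hQ.le (by positivity)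
    nlinarith [mul_nonneg (mul_nonneg hn0.le hn0.le) hn0.le, sq_nonneg n]
  have hQn : Q / (2 * n ^ 2) + Q / (2 * n ^ 2) = Q * (1 / n ^ 2) := by
    field_simp
    ring
  -- power-chain facts
  have hq2 : 2 * n ≤ n ^ 2 := by nlinarith
  have hq3 : 2 * n ^ 2 ≤ n ^ 3 := by nlinarith [sq_nonneg n]
  have hq4 : 2 * n ^ 3 ≤ n ^ 4 := by
    nlinarith [mul_nonneg (mul_nonneg hn0.le hn0.le) hn0.le]
  have hq5 : 2 * n ^ 4 ≤ n ^ 5 := by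
    nlinarith [mul_nonneg (mul_nonneg (mul_nonneg hn0.le hn0.le) hn0.le) hn0.le]
  have hq6 : 2 * n ^ 5 ≤ n ^ 6 := by
    nlinarith [mul_le_mul_of_nonneg_left hq2 (mul_nonneg (mul_nonneg (mul_nonneg hn0.le hn0.le) hn0.le) hn0.le)]
  have hq7 : 2 * n ^ 6 ≤ n ^ 7 := by
    nlinarith [mul_le_mul_of_nonneg_left hq6 hn0.le]
  have hq8 : 2 * n ^ 7 ≤ n ^ 8 := by
    nlinarith [mul_le_mul_of_nonneg_left hq7 hn0.le]
  refine ⟨?_, ?_, ?_, ?_⟩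
  · -- case (a) : k ∉ {i, i+1, i+2}
    rintro ⟨hka, hkb, hkc⟩
    have hL2 : 2 ≤ L := by omega
    have hn3 : (3 : ℝ) ≤ n := by
      rw [hn_def]
      have : (2 : ℝ) ≤ (L : ℝ) := by exact_mod_cast hL2
      linarith
    have hc : (0 : ℝ) ≤ 1 - 1 / n := by
      have : 1 / n ≤ 1 := by rw [div_le_one hn0]; linarith
      linarith
    have hA : 2 * P ≤ NPT L j k := by
      rw [NPT_eq]
      have hS := SPT_lb L j hiL
      rw [← hP_def] at hS
      linarith [zpow_pos hg (2 * ((j : ℤ) + 1) * (k : ℤ) - (k : ℤ) ^ 2 + 1)]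
    have hC : NPT L (j + 1) k ≤ Q * (2 + 1 / n ^ 2) := by
      rw [NPT_eq]
      have hee : 2 * (((j + 1 : ℕ) : ℤ) + 1) * (k : ℤ) - (k : ℤ) ^ 2 + 1
          ≤ ((j : ℤ) + 2) ^ 2 - 3 := by
        have hk' : (k : ℤ) ≤ (j : ℤ) ∨ (j : ℤ) + 4 ≤ (k : ℤ) := by omega
        push_cast
        rcases hk' with h | h <;> nlinarith
      have h1 : gPT L ^ (2 * (((j + 1 : ℕ) : ℤ) + 1) * (k : ℤ) - (k : ℤ) ^ 2 + 1)
          ≤ Q / n ^ 9 := by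
        rw [← hzm3']
        exact zpow_le_zpow_right₀ hg1 hee
      have h2 : Q / n ^ 9 ≤ Q / (2 * n ^ 2) := by
        apply div_le_div_of_nonneg_left hQ.le (by positivity)
        nlinarith [hq3, hq4, hq5, hq6, hq7, hq8, pow_pos hn0 2]
      have : Q * (2 + 1 / n ^ 2) = 2 * Q + Q * (1 / n ^ 2) := by ring
      rw [this, ← hQn]
      linarith [hSj1, hsm]
    have hnum : (1 - 1 / n) * ((2 + 1 / n ^ 2) * (n ^ 3 + 2 * n + 3)) < 2 * n ^ 3 := by
      rw [show (1 - 1 / n) * ((2 + 1 / n ^ 2) * (n ^ 3 + 2 * n + 3))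
          = ((n - 1) * ((2 * n ^ 2 + 1) * (n ^ 3 + 2 * n + 3))) / n ^ 3 by
            field_simp <;> (try ring_nf) <;> (try tauto)]
      rw [div_lt_iff₀ (by positivity)]
      have q4 : 3 * n ^ 4 ≤ n ^ 5 := by
        nlinarith [mul_nonneg (by linarith : (0:ℝ) ≤ n - 3)
          (mul_nonneg (mul_nonneg (mul_nonneg hn0.le hn0.le) hn0.le) hn0.le)]
      have q3 : 3 * n ^ 3 ≤ n ^ 4 := by
        nlinarith [mul_nonneg (by linarith : (0:ℝ) ≤ n - 3)
          (mul_nonneg (mul_nonneg hn0.le hn0.le) hn0.le)]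
      have q1 : 3 * n ≤ n ^ 2 := by nlinarith
      nlinarith [q4, q3, q1, hq3, hn0]
    exact main k 2 (2 + 1 / n ^ 2) (1 - 1 / n) hc (by positivity) hA hC hnum
  · -- case (b) : k = i
    intro hk
    subst hk
    have hA : n ^ 3 * P ≤ NPT L j (j + 1) := by
      rw [NPT_eq]
      have he : 2 * ((j : ℤ) + 1) * ((j + 1 : ℕ) : ℤ) - ((j + 1 : ℕ) : ℤ) ^ 2 + 1
          = ((j : ℤ) + 1) ^ 2 + 1 := by push_cast; ring
      rw [he, hz1]
      linarith [SPT_pos L j]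
    have hC : NPT L (j + 1) (j + 1) ≤ Q * (3 + 1 / n ^ 2) := by
      rw [NPT_eq]
      have he : 2 * (((j + 1 : ℕ) : ℤ) + 1) * ((j + 1 : ℕ) : ℤ) - ((j + 1 : ℕ) : ℤ) ^ 2 + 1
          = ((j : ℤ) + 2) ^ 2 := by push_cast; ring
      rw [he, ← hQ_def]
      have h2 : Q / (2 * n ^ 2) ≤ Q * (1 / n ^ 2) := by
        rw [show Q * (1 / n ^ 2) = Q / n ^ 2 by ring]
        apply div_le_div_of_nonneg_left hQ.le (by positivity)
        nlinarith [pow_pos hn0 2]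
      have : Q * (3 + 1 / n ^ 2) = Q + 2 * Q + Q * (1 / n ^ 2) := by ring
      rw [this]
      linarith [hSj1, hsm]
    have hnum : (1 : ℝ) * ((3 + 1 / n ^ 2) * (n ^ 3 + 2 * n + 3)) < n ^ 3 * n ^ 3 := by
      rw [show (1 : ℝ) * ((3 + 1 / n ^ 2) * (n ^ 3 + 2 * n + 3))
          = ((3 * n ^ 2 + 1) * (n ^ 3 + 2 * n + 3)) / n ^ 2 by
            field_simp <;> (try ring_nf) <;> (try tauto)]
      rw [div_lt_iff₀ (by positivity)]
      nlinarith [hq2, hq3, hq4, hq5, hq6, hq7, hq8, hn0]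
    exact main (j + 1) (n ^ 3) (3 + 1 / n ^ 2) 1 (by norm_num) (by positivity) hA hC hnum
  · -- case (c) : k = i + 1
    intro hk
    subst hk
    have hA : 3 * P ≤ NPT L j (j + 2) := by
      rw [NPT_eq]
      have he : 2 * ((j : ℤ) + 1) * ((j + 2 : ℕ) : ℤ) - ((j + 2 : ℕ) : ℤ) ^ 2 + 1
          = ((j : ℤ) + 1) ^ 2 := by push_cast; ring
      rw [he, ← hP_def]
      have hS := SPT_lb L j hiL
      rw [← hP_def] at hS
      linarith
    have hC : NPT L (j + 1) (j + 2) ≤ Q * (n ^ 3 + 2 + 1 / n ^ 2) := by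
      rw [NPT_eq]
      have he : 2 * (((j + 1 : ℕ) : ℤ) + 1) * ((j + 2 : ℕ) : ℤ) - ((j + 2 : ℕ) : ℤ) ^ 2 + 1
          = ((j : ℤ) + 2) ^ 2 + 1 := by push_cast; ring
      rw [he, hz1']
      have h2 : Q / (2 * n ^ 2) ≤ Q * (1 / n ^ 2) := by
        rw [show Q * (1 / n ^ 2) = Q / n ^ 2 by ring]
        apply div_le_div_of_nonneg_left hQ.le (by positivity)
        nlinarith [pow_pos hn0 2]
      have : Q * (n ^ 3 + 2 + 1 / n ^ 2) = Q * n ^ 3 + 2 * Q + Q * (1 / n ^ 2) := by ring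
      rw [this]
      linarith [hSj1, hsm]
    have hnum : 1 / (2 * n ^ 3) * ((n ^ 3 + 2 + 1 / n ^ 2) * (n ^ 3 + 2 * n + 3))
        < 3 * n ^ 3 := by
      rw [show 1 / (2 * n ^ 3) * ((n ^ 3 + 2 + 1 / n ^ 2) * (n ^ 3 + 2 * n + 3))
          = ((n ^ 5 + 2 * n ^ 2 + 1) * (n ^ 3 + 2 * n + 3)) / (2 * n ^ 5) by
            field_simp <;> (try ring_nf) <;> (try tauto)]
      rw [div_lt_iff₀ (by positivity)]
      nlinarith [hq2, hq3, hq4, hq5, hq6, hq7, hq8, hn0,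
        mul_le_mul_of_nonneg_left hq8 hn0.le]
    exact main (j + 2) 3 (n ^ 3 + 2 + 1 / n ^ 2) (1 / (2 * n ^ 3)) (by positivity)
      (by positivity) hA hC hnum
  · -- case (d) : k = i + 2
    intro hk
    subst hk
    have hL2 : 2 ≤ L := by omega
    have hn3 : (3 : ℝ) ≤ n := by
      rw [hn_def]
      have : (2 : ℝ) ≤ (L : ℝ) := by exact_mod_cast hL2
      linarith
    have hc : (0 : ℝ) ≤ 2 / 3 * (1 - 1 / n) := by
      have : 1 / n ≤ 1 := by rw [div_le_one hn0]; linarith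
      linarith
    have hA : 2 * P ≤ NPT L j (j + 3) := by
      rw [NPT_eq]
      have hS := SPT_lb L j hiL
      rw [← hP_def] at hS
      linarith [zpow_pos hg
        (2 * ((j : ℤ) + 1) * ((j + 3 : ℕ) : ℤ) - ((j + 3 : ℕ) : ℤ) ^ 2 + 1)]
    have hC : NPT L (j + 1) (j + 3) ≤ Q * (3 + 1 / n ^ 2) := by
      rw [NPT_eq]
      have he : 2 * (((j + 1 : ℕ) : ℤ) + 1) * ((j + 3 : ℕ) : ℤ) - ((j + 3 : ℕ) : ℤ) ^ 2 + 1
          = ((j : ℤ) + 2) ^ 2 := by push_cast; ring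
      rw [he, ← hQ_def]
      have h2 : Q / (2 * n ^ 2) ≤ Q * (1 / n ^ 2) := by
        rw [show Q * (1 / n ^ 2) = Q / n ^ 2 by ring]
        apply div_le_div_of_nonneg_left hQ.le (by positivity)
        nlinarith [pow_pos hn0 2]
      have : Q * (3 + 1 / n ^ 2) = Q + 2 * Q + Q * (1 / n ^ 2) := by ring
      rw [this]
      linarith [hSj1, hsm]
    have hnum : 2 / 3 * (1 - 1 / n) * ((3 + 1 / n ^ 2) * (n ^ 3 + 2 * n + 3))
        < 2 * n ^ 3 := by
      rw [show 2 / 3 * (1 - 1 / n) * ((3 + 1 / n ^ 2) * (n ^ 3 + 2 * n + 3))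
          = (2 * ((n - 1) * ((3 * n ^ 2 + 1) * (n ^ 3 + 2 * n + 3)))) / (3 * n ^ 3) by
            field_simp <;> (try ring_nf) <;> (try tauto)]
      rw [div_lt_iff₀ (by positivity)]
      have q4 : 3 * n ^ 4 ≤ n ^ 5 := by
        nlinarith [mul_nonneg (by linarith : (0:ℝ) ≤ n - 3)
          (mul_nonneg (mul_nonneg (mul_nonneg hn0.le hn0.le) hn0.le) hn0.le)]
      have q3 : 3 * n ^ 3 ≤ n ^ 4 := by
        nlinarith [mul_nonneg (by linarith : (0:ℝ) ≤ n - 3)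
          (mul_nonneg (mul_nonneg hn0.le hn0.le) hn0.le)]
      have q1 : 3 * n ≤ n ^ 2 := by nlinarith
      nlinarith [q4, q3, q1, hq3, hn0]
    exact main (j + 3) 2 (3 + 1 / n ^ 2) (2 / 3 * (1 - 1 / n)) hc (by positivity) hA hC hnum
end
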